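/- Let H be a group and g ≥ 1, and let π₁(Σ) be the fundamental group of the closed oriented surface of genus g, presented as ⟨α₁,β₁,…,α_g,β_g | [β_g⁻¹,α_g]⋯[β₁⁻¹,α₁]⟩. Consider the action of H on the set S = {(a₁, b₁, …, a_g, b_g) ∈ H^{2g} : [b_g⁻¹, a_g]·…·[b₁⁻¹, a₁] = 1} by simultaneous conjugation, h▷(a₁, b₁, …, a_g, b_g) = (ha₁h⁻¹, hb₁h⁻¹, …, ha_gh⁻¹, hb_gh⁻¹), and the action of H on Hom(π₁(Σ), H) by pointwise conjugation. Then the bijection S ≅ Hom(π₁(Σ), H) given by ρ ↦ (ρ(α₁), …, ρ(β_g)) is H-equivariant and induces a bijection S/H ≅ Hom(π₁(Σ), H)/H between the orbit spaces; in particular, the protected object for the group H as a Hopf monoid in Set and the surface Σ is the representation variety Hom(π₁(Σ), H)/H. -/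

import Mathlib

open scoped commutatorElement

/-- The standard relator `[β_g⁻¹, α_g] ⋯ [β₁⁻¹, α₁]` of the fundamental group of the closed
oriented surface of genus `g`, as an element of the free group on the `2g` generators
`(i, false) = αᵢ` and `(i, true) = βᵢ`. -/
def surfaceRelator (g : ℕ) : FreeGroup (Fin g × Bool) :=
  ((List.ofFn fun i : Fin g =>
    ⁅(FreeGroup.of (i, true))⁻¹, FreeGroup.of (i, false)⁆).reverse).prod

/-- The fundamental group of the closed oriented surface of genus `g`, presented as
`⟨α₁, β₁, …, α_g, β_g ∣ [β_g⁻¹,α_g]⋯[β₁⁻¹,α₁]⟩`. -/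
def SurfaceGroup (g : ℕ) : Type :=
  PresentedGroup {surfaceRelator g}

noncomputable instance (g : ℕ) : Group (SurfaceGroup g) :=
  inferInstanceAs (Group (PresentedGroup {surfaceRelator g}))

/-- The generator `αᵢ` of the surface group. -/
def SurfaceGroup.a {g : ℕ} (i : Fin g) : SurfaceGroup g :=
  PresentedGroup.of (i, false)

/-- The generator `βᵢ` of the surface group. -/
def SurfaceGroup.b {g : ℕ} (i : Fin g) : SurfaceGroup g :=
  PresentedGroup.of (i, true)

/-- The tuples `(a₁, b₁, …, a_g, b_g) ∈ H^{2g}` satisfying the surface relation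
`[b_g⁻¹, a_g]⋯[b₁⁻¹, a₁] = 1`. -/
def SurfaceTuples (g : ℕ) (H : Type*) [Group H] : Type _ :=
  { v : Fin g → H × H //
    ((List.ofFn fun i : Fin g => ⁅((v i).2)⁻¹, (v i).1⁆).reverse).prod = 1 }

/-- Simultaneous conjugation: `w` is obtained from `v` by conjugating all entries by a single
element of `H`. -/
def conjTupleRel (g : ℕ) (H : Type*) [Group H] : (Fin g → H × H) → (Fin g → H × H) → Prop :=
  fun v w => ∃ h : H, ∀ i : Fin g,
    (w i).1 = h * (v i).1 * h⁻¹ ∧ (w i).2 = h * (v i).2 * h⁻¹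

/-- Pointwise conjugation of group homomorphisms: `ρ'` is obtained from `ρ` by conjugating
with a single element of `H`. -/
def conjHomRel (G H : Type*) [Group G] [Group H] : (G →* H) → (G →* H) → Prop :=
  fun ρ ρ' => ∃ h : H, ∀ x : G, ρ' x = h * ρ x * h⁻¹

def relProd {K : Type*} [Group K] {g : ℕ} (u : Fin g → K × K) : K :=
  ((List.ofFn fun i : Fin g => ⁅((u i).2)⁻¹, (u i).1⁆).reverse).prod

lemma map_relProd {K L : Type*} [Group K] [Group L] (φ : K →* L) {g : ℕ} (u : Fin g → K × K) :
    φ (relProd u) = relProd (fun i => (φ (u i).1, φ (u i).2)) := by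
  unfold relProd
  rw [map_list_prod, List.map_reverse, List.map_ofFn]
  simp only [Function.comp_def, map_commutatorElement, map_inv]

lemma surfaceRelator_eq (g : ℕ) :
    surfaceRelator g = relProd (fun i : Fin g => (FreeGroup.of (i, false), FreeGroup.of (i, true))) :=
  rfl

lemma relProd_ab (g : ℕ) :
    relProd (fun i : Fin g => (SurfaceGroup.a i, SurfaceGroup.b i)) = 1 := by
  have h1 : relProd (fun i : Fin g => (SurfaceGroup.a i, SurfaceGroup.b i)) =
      PresentedGroup.mk {surfaceRelator g} (surfaceRelator g) :=
    (map_relProd (PresentedGroup.mk {surfaceRelator g})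
      (fun i : Fin g => (FreeGroup.of (i, false), FreeGroup.of (i, true)))).symm
  rw [h1]
  exact (QuotientGroup.eq_one_iff _).mpr (Subgroup.subset_normalClosure rfl)

noncomputable def tupleToHom {H : Type*} [Group H] {g : ℕ} (v : SurfaceTuples g H) :
    SurfaceGroup g →* H :=
  PresentedGroup.toGroup (f := fun p : Fin g × Bool => cond p.2 (v.1 p.1).2 (v.1 p.1).1)
    (by
      rintro r rfl
      have h : (FreeGroup.lift fun p : Fin g × Bool => cond p.2 (v.1 p.1).2 (v.1 p.1).1)
          (surfaceRelator g) = relProd v.1 := by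
        rw [surfaceRelator_eq,
          map_relProd (FreeGroup.lift fun p : Fin g × Bool => cond p.2 (v.1 p.1).2 (v.1 p.1).1)]
        simp only [FreeGroup.lift_apply_of]
        rfl
      rw [h]
      exact v.2)

lemma tupleToHom_a {H : Type*} [Group H] {g : ℕ} (v : SurfaceTuples g H) (i : Fin g) :
    tupleToHom v (SurfaceGroup.a i) = (v.1 i).1 :=
  PresentedGroup.toGroup.of _

lemma tupleToHom_b {H : Type*} [Group H] {g : ℕ} (v : SurfaceTuples g H) (i : Fin g) :
    tupleToHom v (SurfaceGroup.b i) = (v.1 i).2 :=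
  PresentedGroup.toGroup.of _

lemma surface_hom_ext {H : Type*} [Group H] {g : ℕ} {φ ψ : SurfaceGroup g →* H}
    (h : ∀ i : Fin g, φ (SurfaceGroup.a i) = ψ (SurfaceGroup.a i) ∧
      φ (SurfaceGroup.b i) = ψ (SurfaceGroup.b i)) : φ = ψ := by
  exact PresentedGroup.ext (rels := {surfaceRelator g}) fun x => by
    obtain ⟨i, _ | _⟩ := x
    · exact (h i).1
    · exact (h i).2

noncomputable def homToTuple {H : Type*} [Group H] {g : ℕ} (ρ : SurfaceGroup g →* H) :
    SurfaceTuples g H :=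
  ⟨fun i => (ρ (SurfaceGroup.a i), ρ (SurfaceGroup.b i)), by
    have := map_relProd ρ (fun i : Fin g => (SurfaceGroup.a i, SurfaceGroup.b i))
    rw [relProd_ab, map_one] at this
    exact this.symm⟩

noncomputable def surfaceEquiv (H : Type*) [Group H] (g : ℕ) :
    (SurfaceGroup g →* H) ≃ SurfaceTuples g H where
  toFun := homToTuple
  invFun := tupleToHom
  left_inv ρ := by
    apply surface_hom_ext
    intro i
    exact ⟨tupleToHom_a _ i, tupleToHom_b _ i⟩
  right_inv v := by
    apply Subtype.ext
    funext i
    exact Prod.ext (tupleToHom_a v i) (tupleToHom_b v i)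

lemma conjTupleRel_equivalence (g : ℕ) (H : Type*) [Group H] :
    Equivalence (conjTupleRel g H) := by
  constructor
  · exact fun v => ⟨1, fun i => by simp⟩
  · rintro v w ⟨h, hi⟩
    exact ⟨h⁻¹, fun i => by rw [(hi i).1, (hi i).2]; constructor <;> group⟩
  · rintro u v w ⟨h1, h1i⟩ ⟨h2, h2i⟩
    refine ⟨h2 * h1, fun i => ?_⟩
    rw [(h2i i).1, (h1i i).1, (h2i i).2, (h1i i).2]
    constructor <;> group

lemma surface_conj_iff {H : Type*} [Group H] {g : ℕ} (ρ ρ' : SurfaceGroup g →* H) :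
    conjHomRel (SurfaceGroup g) H ρ ρ' ↔
      conjTupleRel g H (surfaceEquiv H g ρ).1 (surfaceEquiv H g ρ').1 := by
  constructor
  · rintro ⟨h, hx⟩
    exact ⟨h, fun i => ⟨hx _, hx _⟩⟩
  · rintro ⟨h, hi⟩
    refine ⟨h, fun x => ?_⟩
    have h2 : ρ' = (MulAut.conj h).toMonoidHom.comp ρ :=
      surface_hom_ext fun i => ⟨(hi i).1, (hi i).2⟩
    rw [h2]; rfl

noncomputable def surfaceQuotEquiv (H : Type*) [Group H] (g : ℕ) :
    Quot (fun ρ ρ' : SurfaceGroup g →* H => conjHomRel (SurfaceGroup g) H ρ ρ') ≃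
      Quot (fun v w : SurfaceTuples g H => conjTupleRel g H v.1 w.1) :=
  Quot.congr (surfaceEquiv H g) surface_conj_iff

def subQuotMap (H : Type*) [Group H] (g : ℕ) :
    Quot (fun v w : SurfaceTuples g H => conjTupleRel g H v.1 w.1) →
      { y : Quot (conjTupleRel g H) // ∃ v : SurfaceTuples g H, y = Quot.mk _ v.1 } :=
  Quot.lift (fun v => ⟨Quot.mk _ v.1, v, rfl⟩) (fun _ _ hvw => Subtype.ext (Quot.sound hvw))

lemma subQuotMap_bijective (H : Type*) [Group H] (g : ℕ) :
    Function.Bijective (subQuotMap H g) := by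
  constructor
  · intro x y
    induction x using Quot.ind with | _ v =>
    induction y using Quot.ind with | _ w =>
    intro hxy
    have h1 : Quot.mk (conjTupleRel g H) v.1 = Quot.mk _ w.1 := congrArg Subtype.val hxy
    exact Quot.sound (((conjTupleRel_equivalence g H).eqvGen_iff).mp (Quot.eqvGen_exact h1))
  · rintro ⟨y, v, rfl⟩
    exact ⟨Quot.mk _ v, rfl⟩

noncomputable def subQuotEquiv (H : Type*) [Group H] (g : ℕ) :
    Quot (fun v w : SurfaceTuples g H => conjTupleRel g H v.1 w.1) ≃
      { y : Quot (conjTupleRel g H) // ∃ v : SurfaceTuples g H, y = Quot.mk _ v.1 } :=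
  Equiv.ofBijective _ (subQuotMap_bijective H g)

/-- The bijection between `Hom(π₁(Σ), H)` and the set `S` of `2g`-tuples
satisfying the surface relation is `H`-equivariant for the conjugation actions, and induces a
bijection `Hom(π₁(Σ), H)/H ≅ S/H` of the orbit spaces.  In particular, the protected object
for the group `H` in `Set` — the image of `S` in the quotient of `H^{2g}` by simultaneous
conjugation — is in bijection with the representation variety `Hom(π₁(Σ), H)/H`. -/
theorem surfaceGroup_repVariety_protected_object
    {H : Type*} [Group H] (g : ℕ) (hg : 1 ≤ g) :
    ∃ e : (SurfaceGroup g →* H) ≃ SurfaceTuples g H,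
      (∀ (ρ : SurfaceGroup g →* H) (i : Fin g),
        ((e ρ).1 i) = (ρ (SurfaceGroup.a i), ρ (SurfaceGroup.b i))) ∧
      (∀ (h : H) (ρ : SurfaceGroup g →* H) (i : Fin g),
        (e ((MulAut.conj h).toMonoidHom.comp ρ)).1 i =
          (h * ((e ρ).1 i).1 * h⁻¹, h * ((e ρ).1 i).2 * h⁻¹)) ∧
      (∀ ρ ρ' : SurfaceGroup g →* H,
        conjHomRel (SurfaceGroup g) H ρ ρ' ↔ conjTupleRel g H (e ρ).1 (e ρ').1) ∧
      (∃ q : Quot (fun ρ ρ' : SurfaceGroup g →* H => conjHomRel (SurfaceGroup g) H ρ ρ') ≃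
          Quot (fun v w : SurfaceTuples g H => conjTupleRel g H v.1 w.1),
        ∀ ρ : SurfaceGroup g →* H, q (Quot.mk _ ρ) = Quot.mk _ (e ρ)) ∧
      (∃ p : Quot (fun ρ ρ' : SurfaceGroup g →* H => conjHomRel (SurfaceGroup g) H ρ ρ') ≃
          { y : Quot (conjTupleRel g H) // ∃ v : SurfaceTuples g H, y = Quot.mk _ v.1 },
        ∀ ρ : SurfaceGroup g →* H,
          (p (Quot.mk _ ρ) : Quot (conjTupleRel g H)) = Quot.mk _ (e ρ).1) := by
  refine ⟨surfaceEquiv H g, fun ρ i => rfl, fun h ρ i => rfl, surface_conj_iff,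
    ⟨surfaceQuotEquiv H g, fun ρ => rfl⟩,
    ⟨(surfaceQuotEquiv H g).trans (subQuotEquiv H g), fun ρ => rfl⟩⟩
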